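/- Let S be a commutative ring in which p^m = 0 for some natural number m. If x ∈ W(S) satisfies p·x = p in W(S), then x is a unit in W(S). -/

import Mathlib

open Function WittVector MvPolynomial

section aux

variable {p : ℕ} [hp : Fact p.Prime]

private lemma wv_versch_injective {S : Type*} [CommRing S] :
    Function.Injective (WittVector.verschiebung : WittVector p S → WittVector p S) := by
  intro a b h
  ext n
  rw [← WittVector.verschiebung_coeff_succ (p := p) a n, h,
    WittVector.verschiebung_coeff_succ]

private lemma wv_exists_versch {S : Type*} [CommRing S] (z : WittVector p S)
    (h : z.coeff 0 = 0) : ∃ w : WittVector p S, WittVector.verschiebung w = z := by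
  refine ⟨WittVector.mk p fun n => z.coeff (n + 1), ?_⟩
  ext n
  cases n with
  | zero => rw [WittVector.verschiebung_coeff_zero, h]
  | succ n =>
      rw [WittVector.verschiebung_coeff_succ]
      simp [WittVector.coeff_mk]

private lemma wv_frob_teich {S : Type*} [CommRing S] [CharP S p] (r : S) :
    WittVector.frobenius (WittVector.teichmuller p r) = WittVector.teichmuller p (r ^ p) := by
  ext n
  rw [WittVector.coeff_frobenius_charP]
  cases n with
  | zero => rw [WittVector.teichmuller_coeff_zero, WittVector.teichmuller_coeff_zero]
  | succ n =>
      rw [WittVector.teichmuller_coeff_pos p _ _ n.succ_pos,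
        WittVector.teichmuller_coeff_pos p _ _ n.succ_pos, zero_pow hp.out.ne_zero]

private lemma aeval_sub_mem {S : Type*} [CommRing S] (K : Ideal S) {σ : Type*}
    (u u' : σ → S) (h : ∀ v, u v - u' v ∈ K) (P : MvPolynomial σ ℤ) :
    MvPolynomial.aeval u P - MvPolynomial.aeval u' P ∈ K := by
  refine (Ideal.Quotient.eq).mp ?_
  have hu : (Ideal.Quotient.mkₐ ℤ K).comp (MvPolynomial.aeval u) =
      MvPolynomial.aeval fun v => Ideal.Quotient.mkₐ ℤ K (u v) := MvPolynomial.comp_aeval _ _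
  have hu' : (Ideal.Quotient.mkₐ ℤ K).comp (MvPolynomial.aeval u') =
      MvPolynomial.aeval fun v => Ideal.Quotient.mkₐ ℤ K (u' v) := MvPolynomial.comp_aeval _ _
  have h2 : (fun v => Ideal.Quotient.mkₐ ℤ K (u v)) =
      fun v => Ideal.Quotient.mkₐ ℤ K (u' v) := by
    funext v
    exact (Ideal.Quotient.eq).mpr (h v)
  calc Ideal.Quotient.mk K (MvPolynomial.aeval u P)
      = (Ideal.Quotient.mkₐ ℤ K).comp (MvPolynomial.aeval u) P := rfl
    _ = MvPolynomial.aeval (fun v => Ideal.Quotient.mkₐ ℤ K (u v)) P := by rw [hu]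
    _ = MvPolynomial.aeval (fun v => Ideal.Quotient.mkₐ ℤ K (u' v)) P := by rw [h2]
    _ = (Ideal.Quotient.mkₐ ℤ K).comp (MvPolynomial.aeval u') P := by rw [hu']
    _ = Ideal.Quotient.mk K (MvPolynomial.aeval u' P) := rfl

private lemma key_bilin {S : Type*} [CommRing S] (I J : Ideal S)
    (hIJ : ∀ s ∈ I, ∀ t ∈ J, s * t = 0) (fa fb : ℕ → S)
    (ha : ∀ n, fa n ∈ I) (hb : ∀ n, fb n ∈ J) (P : MvPolynomial (Fin 2 × ℕ) ℤ) :
    MvPolynomial.aeval (uncurry ![fa, fb]) P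
      - MvPolynomial.aeval (uncurry ![fa, (0 : ℕ → S)]) P
      - MvPolynomial.aeval (uncurry ![(0 : ℕ → S), fb]) P
      + MvPolynomial.aeval (uncurry ![(0 : ℕ → S), (0 : ℕ → S)]) P = 0 := by
  induction P using MvPolynomial.induction_on with
  | C c => simp
  | add f g hf hg =>
      simp only [map_add]
      linear_combination hf + hg
  | mul_X f v hf =>
      obtain ⟨i, n⟩ := v
      simp only [map_mul, MvPolynomial.aeval_X]
      fin_cases i
      · simp only [Fin.isValue, Fin.mk_zero, Function.uncurry_apply_pair, Matrix.cons_val_zero,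
          Pi.zero_apply, mul_zero]
        have hJ : MvPolynomial.aeval (uncurry ![(0 : ℕ → S), fb]) f
            - MvPolynomial.aeval (uncurry ![(0 : ℕ → S), (0 : ℕ → S)]) f ∈ J := by
          refine aeval_sub_mem J _ _ ?_ f
          rintro ⟨i, k⟩
          fin_cases i
          · simpa using J.zero_mem
          · simpa using hb k
        have hz : (MvPolynomial.aeval (uncurry ![(0 : ℕ → S), fb]) f
            - MvPolynomial.aeval (uncurry ![(0 : ℕ → S), (0 : ℕ → S)]) f) * fa n = 0 := by
          rw [mul_comm]
          exact hIJ _ (ha n) _ hJ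
        linear_combination (fa n) * hf + hz
      · simp only [Fin.isValue, Fin.mk_one, Function.uncurry_apply_pair, Matrix.cons_val_one,
          Matrix.head_cons, Matrix.cons_val_zero, Pi.zero_apply, mul_zero]
        have hI : MvPolynomial.aeval (uncurry ![fa, fb]) f
            - MvPolynomial.aeval (uncurry ![(0 : ℕ → S), fb]) f ∈ I := by
          refine aeval_sub_mem I _ _ ?_ f
          rintro ⟨i, k⟩
          fin_cases i
          · simpa using ha k
          · simpa using I.zero_mem
        have hz : (MvPolynomial.aeval (uncurry ![fa, fb]) f
            - MvPolynomial.aeval (uncurry ![(0 : ℕ → S), fb]) f) * fb n = 0 :=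
          hIJ _ hI _ (hb n)
        linear_combination hz

private lemma wv_mul_eq_zero {S : Type*} [CommRing S] (I J : Ideal S)
    (hIJ : ∀ s ∈ I, ∀ t ∈ J, s * t = 0) (a b : WittVector p S)
    (ha : ∀ n, a.coeff n ∈ I) (hb : ∀ n, b.coeff n ∈ J) : a * b = 0 := by
  ext n
  have hc0 : (0 : WittVector p S).coeff = (0 : ℕ → S) := funext fun k => WittVector.zero_coeff p S k
  have e1 : MvPolynomial.aeval (uncurry ![a.coeff, (0 : ℕ → S)]) (wittMul p n) = 0 := by
    have h := WittVector.mul_coeff a 0 n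
    rw [mul_zero] at h
    rw [WittVector.peval, hc0] at h
    exact h.symm
  have e2 : MvPolynomial.aeval (uncurry ![(0 : ℕ → S), b.coeff]) (wittMul p n) = 0 := by
    have h := WittVector.mul_coeff (0 : WittVector p S) b n
    rw [zero_mul] at h
    rw [WittVector.peval, hc0] at h
    exact h.symm
  have e3 : MvPolynomial.aeval (uncurry ![(0 : ℕ → S), (0 : ℕ → S)]) (wittMul p n) = 0 := by
    have h := WittVector.mul_coeff (0 : WittVector p S) 0 n
    rw [mul_zero] at h
    rw [WittVector.peval, hc0] at h
    exact h.symm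
  have hk := key_bilin I J hIJ a.coeff b.coeff ha hb (wittMul p n)
  rw [WittVector.mul_coeff, WittVector.peval, WittVector.zero_coeff]
  linear_combination hk + e1 + e2 - e3

private lemma base_charP {S : Type*} [CommRing S] [CharP S p] (x : WittVector p S)
    (hx : (p : WittVector p S) * x = (p : WittVector p S)) : IsUnit x := by
  have hV : WittVector.verschiebung (WittVector.frobenius x) =
      WittVector.verschiebung (WittVector.frobenius (1 : WittVector p S)) := by
    rw [WittVector.verschiebung_frobenius, WittVector.verschiebung_frobenius, one_mul, mul_comm]
    exact hx
  have hF : WittVector.frobenius x = 1 := by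
    have h := wv_versch_injective hV
    rwa [map_one] at h
  set c := x.coeff 0 with hc
  have hcp : c ^ p = 1 := by
    have h := WittVector.coeff_frobenius_charP (x := x) (n := 0)
    rw [hF, WittVector.one_coeff_zero] at h
    exact h.symm
  have hcu : IsUnit c := IsUnit.of_mul_eq_one (a := c) (c ^ (p - 1)) (by
    rw [← pow_succ', Nat.sub_add_cancel hp.out.one_le, hcp])
  obtain ⟨tc, htc⟩ := hcu.map (WittVector.teichmuller p)
  obtain ⟨w, hw⟩ := wv_exists_versch (x - WittVector.teichmuller p c) (by
    have h := map_sub (WittVector.constantCoeff (p := p)) x (WittVector.teichmuller p c)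
    simpa [WittVector.teichmuller_coeff_zero, hc] using h)
  have hwp : w * (p : WittVector p S) = 0 := by
    calc w * (p : WittVector p S) = WittVector.frobenius (WittVector.verschiebung w) :=
          (WittVector.frobenius_verschiebung w).symm
      _ = WittVector.frobenius (x - WittVector.teichmuller p c) := by rw [hw]
      _ = 1 - WittVector.teichmuller p (c ^ p) := by rw [map_sub, hF, wv_frob_teich]
      _ = 0 := by rw [hcp, MonoidHom.map_one, sub_self]
  set t' : WittVector p S := ↑tc⁻¹ with ht'
  set u := w * WittVector.frobenius t' with hu
  have hVu : WittVector.verschiebung u = WittVector.verschiebung w * t' :=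
    WittVector.verschiebung_mul_frobenius w t'
  have hup : u * (p : WittVector p S) = 0 := by
    rw [hu]
    linear_combination (WittVector.frobenius t') * hwp
  have h3 : (tc : WittVector p S) * t' = 1 := by
    rw [ht']; exact tc.mul_inv
  have hx2 : x = ↑tc * (1 + WittVector.verschiebung u) := by
    have h4 : (tc : WittVector p S) * (1 + WittVector.verschiebung u)
        = ↑tc + (↑tc * t') * WittVector.verschiebung w := by
      rw [hVu]; ring
    rw [h4, h3, one_mul, htc]
    linear_combination -hw
  have hVu2 : WittVector.verschiebung u * WittVector.verschiebung u = 0 := by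
    have h5 := WittVector.verschiebung_mul_frobenius u (WittVector.verschiebung u)
    rw [WittVector.frobenius_verschiebung, hup, mul_zero, map_zero] at h5
    exact h5.symm
  have hunit : IsUnit (1 + WittVector.verschiebung u) :=
    IsUnit.of_mul_eq_one (1 - WittVector.verschiebung u) (by linear_combination -hVu2)
  rw [hx2]
  exact tc.isUnit.mul hunit

private lemma main_aux (p : ℕ) [hp : Fact p.Prime] (m : ℕ) :
    ∀ (S : Type u) [CommRing S], (p : S) ^ m = 0 → ∀ x : WittVector p S,
      (p : WittVector p S) * x = (p : WittVector p S) → IsUnit x := by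
  induction m with
  | zero =>
      intro S _ hS x _
      rw [pow_zero] at hS
      have : Subsingleton S := subsingleton_of_zero_eq_one hS.symm
      have : Subsingleton (WittVector p S) :=
        ⟨fun a b => by ext n; exact Subsingleton.elim _ _⟩
      exact IsUnit.of_mul_eq_one (a := x) 1 (Subsingleton.elim _ _)
  | succ m ih =>
      intro S _ hS x hx
      rcases Nat.eq_zero_or_pos m with rfl | hm
      · rw [zero_add, pow_one] at hS
        rcases subsingleton_or_nontrivial S with hsub | hnt
        · have : Subsingleton (WittVector p S) :=
            ⟨fun a b => by ext n; exact Subsingleton.elim _ _⟩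
          exact IsUnit.of_mul_eq_one (a := x) 1 (Subsingleton.elim _ _)
        · have : CharP S p := (CharP.charP_iff_prime_eq_zero hp.out).mpr hS
          exact base_charP x hx
      · set I := Ideal.span {(p : S) ^ m} with hI
        set π := Ideal.Quotient.mk I with hπ
        have hq : (p : S ⧸ I) ^ m = 0 := by
          have h1 : π ((p : S) ^ m) = 0 :=
            Ideal.Quotient.eq_zero_iff_mem.mpr (Ideal.subset_span rfl)
          rw [map_pow, map_natCast] at h1
          exact h1
        have hxq : (p : WittVector p (S ⧸ I)) * (WittVector.map π x)
            = (p : WittVector p (S ⧸ I)) := by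
          have h2 := congrArg (WittVector.map (p := p) π) hx
          rwa [map_mul, map_natCast] at h2
        obtain ⟨v, hv⟩ := ih (S ⧸ I) hq _ hxq
        obtain ⟨y, hy⟩ := WittVector.map_surjective π Ideal.Quotient.mk_surjective ((v⁻¹ : (WittVector p (S ⧸ I))ˣ) : WittVector p (S ⧸ I))
        have hk : ∀ n, (x * y - 1).coeff n ∈ I := by
          intro n
          have h6 : WittVector.map π (x * y - 1) = 0 := by
            rw [map_sub, map_mul, map_one, hy, ← hv, Units.mul_inv, sub_self]
          have h7 : π ((x * y - 1).coeff n) = 0 := by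
            rw [← WittVector.map_coeff, h6, WittVector.zero_coeff]
          exact Ideal.Quotient.eq_zero_iff_mem.mp h7
        have hIJ : ∀ s ∈ I, ∀ t ∈ I, s * t = 0 := by
          intro s hs t ht
          rw [hI, Ideal.mem_span_singleton'] at hs ht
          obtain ⟨cs, rfl⟩ := hs
          obtain ⟨ct, rfl⟩ := ht
          have h8 : (p : S) ^ m * (p : S) ^ m = 0 := by
            have h9 : (p : S) ^ m * (p : S) ^ m = (p : S) ^ (m + 1) * (p : S) ^ (m - 1) := by
              rw [← pow_add, ← pow_add]
              congr 1
              omega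
            rw [h9, hS, zero_mul]
          calc cs * (p : S) ^ m * (ct * (p : S) ^ m)
              = (cs * ct) * ((p : S) ^ m * (p : S) ^ m) := by ring
            _ = 0 := by rw [h8, mul_zero]
        have hsq : (x * y - 1) * (x * y - 1) = 0 :=
          wv_mul_eq_zero I I hIJ _ _ hk hk
        have hxy : (x * y) * (2 - x * y) = 1 := by linear_combination -hsq
        exact isUnit_of_mul_isUnit_left (IsUnit.of_mul_eq_one _ hxy)

end aux

theorem isUnit_of_p_mul_eq_p_of_p_nilpotent (p m : ℕ) [Fact p.Prime] (S : Type*) [CommRing S]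
    (hS : (p : S) ^ m = 0) (x : WittVector p S)
    (hx : (p : WittVector p S) * x = (p : WittVector p S)) : IsUnit x := by
  exact main_aux p m S hS x hx
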